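/- Let D ∈ ℕ and equip the space of real D×D matrices with the entrywise inner product a·b = Σ_{i,j} a_{ij} b_{ij}. Let ξ : ℝ^{D×D} → ℝ be differentiable and let ∇ξ denote its gradient with respect to this inner product. Assume: (i) ξ(a) = ξ(aᵀ) for every a ∈ ℝ^{D×D}; (ii) if a and b are symmetric positive semidefinite and a − b is positive semidefinite, then ξ(a) ≥ ξ(b). Then for every symmetric matrix a, the matrix ∇ξ(a) is symmetric; and for every symmetric positive semidefinite matrix a, the matrix ∇ξ(a) is symmetric positive semidefinite. -/

import Mathlib

open Matrix Topology Filter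
attribute [local instance] Matrix.normedAddCommGroup Matrix.normedSpace

/-- Let `ξ : ℝ^{D×D} → ℝ` be differentiable with gradient `Dξ` with
respect to the entrywise inner product (i.e. the Fréchet derivative of `ξ` at `a` is
`h ↦ Σ_{i,j} (Dξ a)_{ij} h_{ij}`). If `ξ(a) = ξ(aᵀ)` for all `a`, and `ξ` is monotone on
positive semidefinite matrices (`a, b, a − b` PSD implies `ξ(b) ≤ ξ(a)`), then `Dξ a` is
symmetric whenever `a` is symmetric, and `Dξ a` is positive semidefinite whenever `a` is. -/
theorem stmt11 {D : ℕ}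
    (ξ : Matrix (Fin D) (Fin D) ℝ → ℝ)
    (Dξ : Matrix (Fin D) (Fin D) ℝ → Matrix (Fin D) (Fin D) ℝ)
    (hdiff : ∀ a : Matrix (Fin D) (Fin D) ℝ,
      ∃ f' : Matrix (Fin D) (Fin D) ℝ →L[ℝ] ℝ,
        HasFDerivAt ξ f' a ∧ ∀ h : Matrix (Fin D) (Fin D) ℝ, f' h = ∑ i, ∑ j, Dξ a i j * h i j)
    (hsym : ∀ a : Matrix (Fin D) (Fin D) ℝ, ξ aᵀ = ξ a)
    (hmono : ∀ a b : Matrix (Fin D) (Fin D) ℝ,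
      a.PosSemidef → b.PosSemidef → (a - b).PosSemidef → ξ b ≤ ξ a) :
    (∀ a : Matrix (Fin D) (Fin D) ℝ, a.IsSymm → (Dξ a).IsSymm) ∧
    (∀ a : Matrix (Fin D) (Fin D) ℝ, a.PosSemidef → (Dξ a).PosSemidef) := by
  have key : ∀ a : Matrix (Fin D) (Fin D) ℝ, a.IsSymm → (Dξ a).IsSymm := by
    intro a ha
    obtain ⟨f', hf', hf'eq⟩ := hdiff a
    set T : Matrix (Fin D) (Fin D) ℝ →L[ℝ] Matrix (Fin D) (Fin D) ℝ :=
      LinearMap.toContinuousLinearMap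
        (Matrix.transposeLinearEquiv (Fin D) (Fin D) ℝ ℝ).toLinearMap with hTdef
    have hT : ∀ x : Matrix (Fin D) (Fin D) ℝ, T x = xᵀ := fun x => rfl
    have h1 : HasFDerivAt (fun x => ξ xᵀ) (f'.comp T) a := by
      have hTa : HasFDerivAt T T a := T.hasFDerivAt
      have hfa : HasFDerivAt ξ f' (T a) := by
        rw [hT a, Matrix.IsSymm.eq ha]; exact hf'
      exact hfa.comp a hTa
    have h2 : HasFDerivAt ξ (f'.comp T) a := by
      have : (fun x => ξ xᵀ) = ξ := funext fun x => hsym x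
      rwa [this] at h1
    have huniq : f'.comp T = f' := h2.unique hf'
    have hcomp : ∀ h : Matrix (Fin D) (Fin D) ℝ, f' hᵀ = f' h := by
      intro h
      have := congrArg (fun g : Matrix (Fin D) (Fin D) ℝ →L[ℝ] ℝ => g h) huniq
      simpa [hT] using this
    rw [Matrix.IsSymm]
    ext i j
    have := hcomp (Matrix.single j i 1)
    rw [hf'eq, hf'eq] at this
    simpa [Matrix.single, Matrix.transpose_apply, mul_ite, ite_and,
      Finset.sum_ite_eq, Finset.sum_ite_eq'] using this.symm
  refine ⟨key, fun a hpsd => ?_⟩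
  have hherm : (Dξ a).IsHermitian := by
    have := key a (by simpa [Matrix.IsSymm] using hpsd.1)
    simpa [Matrix.IsHermitian, Matrix.IsSymm] using this
  refine Matrix.PosSemidef.of_dotProduct_mulVec_nonneg hherm fun v => ?_
  obtain ⟨f', hf', hf'eq⟩ := hdiff a
  set h : Matrix (Fin D) (Fin D) ℝ := Matrix.vecMulVec v v with hh
  have hhpsd : ∀ t : ℝ, 0 ≤ t → (t • h).PosSemidef := by
    intro t ht
    refine Matrix.PosSemidef.of_dotProduct_mulVec_nonneg ?_ ?_
    · ext i j
      simp [hh, Matrix.vecMulVec, mul_comm]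
    · intro x
      have : (star x) ⬝ᵥ ((t • h) *ᵥ x) = t * (∑ i, v i * x i) ^ 2 := by
        simp only [hh, Matrix.vecMulVec_apply, dotProduct, Matrix.mulVec, Matrix.smul_apply,
          Pi.star_apply, star_trivial, smul_eq_mul, sq, Finset.sum_mul, Finset.mul_sum]
        rw [Finset.sum_comm]
        exact Finset.sum_congr rfl fun i _ => Finset.sum_congr rfl fun j _ => by ring
      rw [this]
      positivity
  -- g(t) = ξ (a + t • h) has derivative f' h at 0, and g(t) ≥ g(0) for t ≥ 0
  have hc : HasDerivAt (fun t : ℝ => a + t • h) h 0 := by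
    have := ((hasDerivAt_id (0 : ℝ)).smul_const h).const_add a
    rw [one_smul] at this
    exact this
  have hg : HasDerivAt (fun t : ℝ => ξ (a + t • h)) (f' h) 0 := by
    have hfa : HasFDerivAt ξ f' ((fun t : ℝ => a + t • h) 0) := by simpa using hf'
    exact hfa.comp_hasDerivAt 0 hc
  have hge : ∀ t : ℝ, 0 < t → ξ a ≤ ξ (a + t • h) := by
    intro t ht
    have h1 : (a + t • h).PosSemidef := hpsd.add (hhpsd t ht.le)
    have h2 : ((a + t • h) - a).PosSemidef := by simpa using hhpsd t ht.le
    exact hmono _ _ h1 hpsd h2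
  have hnn : 0 ≤ f' h := by
    have hslope : Filter.Tendsto (slope (fun t : ℝ => ξ (a + t • h)) 0) (𝓝[>] 0) (𝓝 (f' h)) := by
      have := hasDerivAt_iff_tendsto_slope.mp hg
      exact this.mono_left (nhdsWithin_mono 0 fun x hx => ne_of_gt hx)
    refine ge_of_tendsto hslope ?_
    filter_upwards [self_mem_nhdsWithin] with t ht
    have ht' : (0:ℝ) < t := ht
    rw [slope_def_field]
    apply div_nonneg
    · have := hge t ht'
      simp only [zero_smul, add_zero]
      linarith
    · simpa using ht'.le
  have hfv : f' h = star v ⬝ᵥ (Dξ a) *ᵥ v := by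
    rw [hf'eq]
    simp only [hh, Matrix.vecMulVec_apply, dotProduct, Matrix.mulVec,
      star_trivial, Pi.star_apply, Finset.mul_sum]
    exact Finset.sum_congr rfl fun i _ => Finset.sum_congr rfl fun j _ => by ring
  rw [← hfv]
  exact hnn
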